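/- The real projective space ℝP^d is homeomorphic to SP^d(ℂP¹)_ℝ, the subspace of the d-fold symmetric product of the Riemann sphere consisting of unordered d-tuples invariant under complex conjugation. -/

import Mathlib

/-- The topology on a projectivization, as a quotient of the nonzero vectors. -/
noncomputable instance projectivizationTopology (K V : Type*) [DivisionRing K] [AddCommGroup V]
    [Module K V] [TopologicalSpace V] : TopologicalSpace (Projectivization K V) :=
  instTopologicalSpaceQuotient

/-- The setoid on `d`-tuples identifying tuples up to permutation; its quotient is the
`d`-fold symmetric product. -/
def spSetoid (d : ℕ) (Y : Type*) : Setoid (Fin d → Y) where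
  r f g := ∃ e : Equiv.Perm (Fin d), f ∘ e = g
  iseqv := by
    refine ⟨fun f => ⟨Equiv.refl _, rfl⟩, ?_, ?_⟩
    · rintro f g ⟨e, rfl⟩
      exact ⟨e.symm, by ext i; simp⟩
    · rintro f g h ⟨e, rfl⟩ ⟨e', rfl⟩
      exact ⟨e'.trans e, by ext i; simp⟩

/-- The `d`-fold symmetric product of a topological space, with the quotient topology. -/
def SP (d : ℕ) (Y : Type*) [TopologicalSpace Y] : Type _ :=
  Quotient (spSetoid d Y)

instance (d : ℕ) (Y : Type*) [TopologicalSpace Y] : TopologicalSpace (SP d Y) :=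
  instTopologicalSpaceQuotient

/-- Complex conjugation on the Riemann sphere `ℂP¹ = OnePoint ℂ`. -/
def sphereConj : OnePoint ℂ → OnePoint ℂ :=
  Option.map (starRingEnd ℂ)

/-- The involution induced by complex conjugation on the symmetric product
`SP^d(ℂP¹)`. -/
def spConj (d : ℕ) : SP d (OnePoint ℂ) → SP d (OnePoint ℂ) :=
  Quotient.map (fun f => sphereConj ∘ f)
    (by rintro f g ⟨e, rfl⟩; exact ⟨e, rfl⟩)


open Set Filter Topology

/-- Generic criterion: a quotient is T2 if the quotient map is open and the relation closed. -/
theorem t2space_quotient_of {X : Type*} [TopologicalSpace X] (s : Setoid X)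
    (hopen : ∀ U : Set X, IsOpen U → IsOpen (Quotient.mk s '' U))
    (hclosed : IsClosed {p : X × X | s.r p.1 p.2}) : T2Space (Quotient s) := by
  constructor
  intro a b hab
  obtain ⟨x, rfl⟩ := Quotient.exists_rep a
  obtain ⟨y, rfl⟩ := Quotient.exists_rep b
  have hxy : (x, y) ∈ {p : X × X | s.r p.1 p.2}ᶜ := fun h => hab (Quotient.sound h)
  obtain ⟨U, V, hU, hV, hxU, hyV, hUV⟩ := isOpen_prod_iff.1 hclosed.isOpen_compl x y hxy
  refine ⟨Quotient.mk s '' U, Quotient.mk s '' V, hopen U hU, hopen V hV,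
    ⟨x, hxU, rfl⟩, ⟨y, hyV, rfl⟩, ?_⟩
  rw [Set.disjoint_left]
  rintro z ⟨u, hu, rfl⟩ ⟨v, hv, hvz⟩
  exact hUV (Set.mk_mem_prod hu hv) (Quotient.exact hvz.symm)

section ProjT2

variable (n : ℕ)

private abbrev Snz (n : ℕ) := {v : Fin n → ℂ // v ≠ 0}

private def scl (a : ℂˣ) (v : Snz n) : Snz n :=
  ⟨a • v.1, fun h => v.2 (by simpa using congrArg (fun w => a⁻¹ • w) h)⟩

private lemma rel_iff (x y : Snz n) :
    (projectivizationSetoid ℂ (Fin n → ℂ)).r x y ↔ ∃ a : ℂˣ, a • y.1 = x.1 :=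
  MulAction.mem_orbit_iff

theorem t2_projectivization : T2Space (Projectivization ℂ (Fin n → ℂ)) := by
  apply t2space_quotient_of (projectivizationSetoid ℂ (Fin n → ℂ))
  · -- open quotient map
    intro U hU
    letI s := projectivizationSetoid ℂ (Fin n → ℂ)
    have : IsQuotientMap (Quotient.mk s) := isQuotientMap_quot_mk
    rw [← this.isOpen_preimage]
    have key : (Quotient.mk s ⁻¹' (Quotient.mk s '' U)) =
        ⋃ a : ℂˣ, (scl n a) ⁻¹' U := by
      ext x
      simp only [Set.mem_preimage, Set.mem_image, Set.mem_iUnion]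
      constructor
      · rintro ⟨u, hu, hux⟩
        obtain ⟨a, ha⟩ := (rel_iff n u x).1 (Quotient.exact hux)
        refine ⟨a, ?_⟩
        have : scl n a x = u := Subtype.ext ha
        rwa [this]
      · rintro ⟨a, ha⟩
        exact ⟨_, ha, Quotient.sound ((rel_iff n _ x).2 ⟨a, rfl⟩)⟩
    rw [key]
    refine isOpen_iUnion fun a => hU.preimage ?_
    exact Continuous.subtype_mk (continuous_subtype_val.const_smul a) _
  · -- closed relation
    have key : {p : Snz n × Snz n | (projectivizationSetoid ℂ (Fin n → ℂ)).r p.1 p.2} =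
        ⋂ i, ⋂ j, {p : Snz n × Snz n | p.1.1 i * p.2.1 j = p.1.1 j * p.2.1 i} := by
      ext p
      simp only [Set.mem_setOf_eq, Set.mem_iInter, rel_iff]
      constructor
      · rintro ⟨a, ha⟩ i j
        have hi : p.1.1 i = a * p.2.1 i := by rw [← ha]; rfl
        have hj : p.1.1 j = a * p.2.1 j := by rw [← ha]; rfl
        rw [hi, hj]; ring
      · intro h
        obtain ⟨k, hk⟩ := Function.ne_iff.1 p.2.2
        rw [Pi.zero_apply] at hk
        have hvk : p.1.1 k ≠ 0 := by
          intro hvk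
          apply p.1.2
          funext j
          have hkj := h k j
          rw [hvk, zero_mul] at hkj
          have := (mul_eq_zero.1 hkj.symm).resolve_right hk
          simpa using this
        refine ⟨Units.mk0 (p.1.1 k / p.2.1 k) (div_ne_zero hvk hk), ?_⟩
        apply funext
        intro j
        show (p.1.1 k / p.2.1 k) * p.2.1 j = p.1.1 j
        rw [div_mul_eq_mul_div, div_eq_iff hk]
        exact h k j
    rw [key]
    refine isClosed_iInter fun i => isClosed_iInter fun j => isClosed_eq ?_ ?_
    · exact ((continuous_apply i).comp (continuous_subtype_val.comp continuous_fst)).mul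
        ((continuous_apply j).comp (continuous_subtype_val.comp continuous_snd))
    · exact ((continuous_apply j).comp (continuous_subtype_val.comp continuous_fst)).mul
        ((continuous_apply i).comp (continuous_subtype_val.comp continuous_snd))

end ProjT2

section SPtop

lemma continuous_sphereConj : Continuous sphereConj := by
  have h1 : Continuous (starRingEnd ℂ) := Complex.continuous_conj
  have h2 : Filter.Tendsto (starRingEnd ℂ) (Filter.coclosedCompact ℂ)
      (Filter.coclosedCompact ℂ) := by
    rw [Filter.coclosedCompact_eq_cocompact]
    exact Filter.tendsto_map.mono_right (le_of_eq Complex.conjCLE.toHomeomorph.map_cocompact)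
  exact OnePoint.continuous_map h1 h2

variable (d : ℕ)

private lemma sp_rel_iff (f g : Fin d → OnePoint ℂ) :
    (spSetoid d (OnePoint ℂ)).r f g ↔ ∃ e : Equiv.Perm (Fin d), f ∘ e = g := Iff.rfl

theorem t2_SP : T2Space (SP d (OnePoint ℂ)) := by
  apply t2space_quotient_of (spSetoid d (OnePoint ℂ))
  · intro U hU
    letI s := spSetoid d (OnePoint ℂ)
    have hq : IsQuotientMap (Quotient.mk s) := isQuotientMap_quot_mk
    rw [← hq.isOpen_preimage]
    have key : (Quotient.mk s ⁻¹' (Quotient.mk s '' U)) =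
        ⋃ e : Equiv.Perm (Fin d), (fun f : Fin d → OnePoint ℂ => f ∘ e) ⁻¹' U := by
      ext f
      simp only [Set.mem_preimage, Set.mem_image, Set.mem_iUnion]
      constructor
      · rintro ⟨u, hu, huf⟩
        obtain ⟨e, he⟩ := Quotient.exact huf
        refine ⟨e.symm, ?_⟩
        have : f ∘ e.symm = u := by
          rw [← he]; funext i; simp
        rwa [this]
      · rintro ⟨e, he⟩
        exact ⟨f ∘ e, he, Quotient.sound ⟨e.symm, by funext i; simp⟩⟩
    rw [key]
    exact isOpen_iUnion fun e => hU.preimage (continuous_pi fun i => continuous_apply (e i))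
  · have key : {p : (Fin d → OnePoint ℂ) × (Fin d → OnePoint ℂ) |
        (spSetoid d (OnePoint ℂ)).r p.1 p.2} =
        ⋃ e : Equiv.Perm (Fin d), ⋂ i, {p : (Fin d → OnePoint ℂ) × (Fin d → OnePoint ℂ) |
          p.1 (e i) = p.2 i} := by
      ext p
      simp only [Set.mem_setOf_eq, Set.mem_iUnion, Set.mem_iInter]
      constructor
      · rintro ⟨e, he⟩
        exact ⟨e, fun i => congrFun he i⟩
      · rintro ⟨e, he⟩
        exact ⟨e, funext he⟩
    rw [key]
    refine isClosed_iUnion_of_finite fun e => isClosed_iInter fun i => isClosed_eq ?_ ?_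
    · exact (continuous_apply (e i)).comp continuous_fst
    · exact (continuous_apply i).comp continuous_snd

theorem compact_fixedSP : IsCompact {x : SP d (OnePoint ℂ) | spConj d x = x} := by
  letI s := spSetoid d (OnePoint ℂ)
  have hK : IsCompact {f : Fin d → OnePoint ℂ | ∃ e : Equiv.Perm (Fin d),
      (sphereConj ∘ f) ∘ e = f} := by
    refine IsClosed.isCompact ?_
    have key : {f : Fin d → OnePoint ℂ | ∃ e : Equiv.Perm (Fin d), (sphereConj ∘ f) ∘ e = f} =
        ⋃ e : Equiv.Perm (Fin d), ⋂ i, {f : Fin d → OnePoint ℂ |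
          sphereConj (f (e i)) = f i} := by
      ext f
      simp only [Set.mem_setOf_eq, Set.mem_iUnion, Set.mem_iInter]
      constructor
      · rintro ⟨e, he⟩; exact ⟨e, fun i => congrFun he i⟩
      · rintro ⟨e, he⟩; exact ⟨e, funext he⟩
    rw [key]
    refine isClosed_iUnion_of_finite fun e => isClosed_iInter fun i => isClosed_eq ?_ ?_
    · exact continuous_sphereConj.comp (continuous_apply (e i))
    · exact continuous_apply i
  have himg : {x : SP d (OnePoint ℂ) | spConj d x = x} =
      Quotient.mk s '' {f : Fin d → OnePoint ℂ | ∃ e : Equiv.Perm (Fin d),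
        (sphereConj ∘ f) ∘ e = f} := by
    ext x
    simp only [Set.mem_setOf_eq, Set.mem_image]
    constructor
    · intro hx
      obtain ⟨f, rfl⟩ := Quotient.exists_rep x
      have : spConj d (Quotient.mk s f) = Quotient.mk s (sphereConj ∘ f) := rfl
      rw [this] at hx
      obtain ⟨e, he⟩ := Quotient.exact hx
      exact ⟨f, ⟨e, he⟩, rfl⟩
    · rintro ⟨f, ⟨e, he⟩, rfl⟩
      show Quotient.mk s (sphereConj ∘ f) = Quotient.mk s f
      exact Quotient.sound ⟨e, he⟩
  rw [himg]
  exact hK.image (continuous_quot_mk)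

theorem compact_realProj (n : ℕ) [NeZero n] :
    CompactSpace (Projectivization ℝ (Fin n → ℝ)) := by
  letI s := projectivizationSetoid ℝ (Fin n → ℝ)
  set φ : Metric.sphere (0 : Fin n → ℝ) 1 → Projectivization ℝ (Fin n → ℝ) :=
    fun v => Projectivization.mk ℝ v.1 (by
      intro h
      have := v.2
      rw [mem_sphere_zero_iff_norm] at this
      rw [h] at this; simp at this) with hφ
  have hcont : Continuous φ := by
    apply Continuous.comp continuous_quot_mk
    exact Continuous.subtype_mk continuous_subtype_val _
  have hsurj : Function.Surjective φ := by
    intro x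
    obtain ⟨⟨v, hv⟩, rfl⟩ := Quotient.exists_rep x
    have hnv : ‖v‖ ≠ 0 := norm_ne_zero_iff.2 hv
    refine ⟨⟨‖v‖⁻¹ • v, ?_⟩, ?_⟩
    · rw [mem_sphere_zero_iff_norm, norm_smul, norm_inv, norm_norm, inv_mul_cancel₀ hnv]
    · show Projectivization.mk ℝ _ _ = _
      have : Quotient.mk s ⟨v, hv⟩ = Projectivization.mk ℝ v hv := rfl
      rw [this]
      rw [Projectivization.mk_eq_mk_iff']
      exact ⟨‖v‖⁻¹, rfl⟩
  haveI : CompactSpace (Metric.sphere (0 : Fin n → ℝ) 1) :=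
    isCompact_iff_compactSpace.mp (isCompact_sphere 0 1)
  constructor
  rw [← Set.range_eq_univ.2 hsurj]
  exact isCompact_range hcont

end SPtop

section PolyPart

open Polynomial OnePoint

/-- Linear factor attached to a point of the Riemann sphere. -/
noncomputable def lpoly : OnePoint ℂ → ℂ[X] := fun y => y.elim 1 (fun z => X - C z)

@[simp] lemma lpoly_infty : lpoly ∞ = 1 := rfl
@[simp] lemma lpoly_coe (z : ℂ) : lpoly (z : OnePoint ℂ) = X - C z := rfl

lemma lpoly_monic (y : OnePoint ℂ) : (lpoly y).Monic := by
  cases y with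
  | infty => exact monic_one
  | coe z => exact monic_X_sub_C z

lemma lpoly_natDegree_le (y : OnePoint ℂ) : (lpoly y).natDegree ≤ 1 := by
  cases y with
  | infty => simp [lpoly]
  | coe z => simp [lpoly]

/-- The polynomial attached to a `d`-tuple of points of the Riemann sphere. -/
noncomputable def Pprod (d : ℕ) (f : Fin d → OnePoint ℂ) : ℂ[X] := ∏ i, lpoly (f i)

lemma Pprod_monic (d : ℕ) (f : Fin d → OnePoint ℂ) : (Pprod d f).Monic :=
  monic_prod_of_monic _ _ fun i _ => lpoly_monic (f i)

lemma Pprod_natDegree_le (d : ℕ) (f : Fin d → OnePoint ℂ) : (Pprod d f).natDegree ≤ d := by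
  refine le_trans (natDegree_prod_le _ _) ?_
  calc ∑ i : Fin d, (lpoly (f i)).natDegree ≤ ∑ _i : Fin d, 1 :=
        Finset.sum_le_sum fun i _ => lpoly_natDegree_le (f i)
    _ = d := by simp

lemma Pprod_comp_perm (d : ℕ) (f : Fin d → OnePoint ℂ) (e : Equiv.Perm (Fin d)) :
    Pprod d (f ∘ e) = Pprod d f :=
  Equiv.prod_comp e fun i => lpoly (f i)

/-- Coefficient vector of a polynomial, truncated in degrees `≤ d`. -/
noncomputable def cvec (d : ℕ) (P : ℂ[X]) : Fin (d + 1) → ℂ := fun k => P.coeff k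

lemma cvec_ne_zero (d : ℕ) {P : ℂ[X]} (hm : P.Monic) (hd : P.natDegree ≤ d) :
    cvec d P ≠ 0 := by
  intro h
  have : cvec d P ⟨P.natDegree, Nat.lt_succ_of_le hd⟩ = 0 := by rw [h]; rfl
  rw [cvec] at this
  simp only [Polynomial.coeff_natDegree] at this
  rw [hm.leadingCoeff] at this
  exact one_ne_zero this

lemma eq_C_mul_of_cvec_smul (d : ℕ) {P Q : ℂ[X]} (hP : P.natDegree ≤ d) (hQ : Q.natDegree ≤ d)
    (a : ℂ) (h : cvec d P = a • cvec d Q) : P = C a * Q := by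
  ext k
  rw [coeff_C_mul]
  by_cases hk : k ≤ d
  · have := congrFun h ⟨k, Nat.lt_succ_of_le hk⟩
    simpa [cvec] using this
  · push_neg at hk
    rw [Polynomial.coeff_eq_zero_of_natDegree_lt (lt_of_le_of_lt hP hk),
      Polynomial.coeff_eq_zero_of_natDegree_lt (lt_of_le_of_lt hQ hk), mul_zero]

lemma Pprod_eq_list (d : ℕ) (f : Fin d → OnePoint ℂ) :
    Pprod d f = ((List.ofFn f).map lpoly).prod := by
  rw [List.map_ofFn, List.prod_ofFn]; rfl

lemma list_prod_lpoly (l : List (OnePoint ℂ)) :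
    (l.map lpoly).prod = ((l.filterMap id).map (fun z => X - C z)).prod := by
  induction l with
  | nil => rfl
  | cons y t ih =>
    cases y with
    | infty => rw [List.map_cons, lpoly_infty, List.prod_cons, one_mul]; exact ih
    | coe z => rw [List.map_cons, lpoly_coe, List.prod_cons, ih]; rfl

lemma Pprod_eq_multiset (d : ℕ) (f : Fin d → OnePoint ℂ) :
    Pprod d f = (Multiset.map (fun z => X - C z)
      (((List.ofFn f).filterMap id : List ℂ) : Multiset ℂ)).prod := by
  rw [Pprod_eq_list, list_prod_lpoly]
  rw [Multiset.map_coe, Multiset.prod_coe]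

lemma Pprod_roots (d : ℕ) (f : Fin d → OnePoint ℂ) :
    (Pprod d f).roots = (((List.ofFn f).filterMap id : List ℂ) : Multiset ℂ) := by
  rw [Pprod_eq_multiset]
  exact roots_multiset_prod_X_sub_C _

end PolyPart

section PermPart

lemma perm_replicate_append {α : Type*} (l : List (Option α)) :
    l.Perm (List.replicate (l.length - (l.filterMap id).length) none ++
      (l.filterMap id).map some) := by
  induction l with
  | nil => simp
  | cons y t ih =>
    cases y with
    | none =>
      have hle : (t.filterMap id).length ≤ t.length := t.length_filterMap_le id
      have hfmn : ((none :: t : List (Option α)).filterMap id) = t.filterMap id := by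
        simp [List.filterMap_cons]
      have hl : (none :: t : List (Option α)).length - ((none :: t).filterMap id).length
          = (t.length - (t.filterMap id).length) + 1 := by
        rw [hfmn, List.length_cons]
        omega
      rw [hl, hfmn, List.replicate_succ, List.cons_append]
      exact ih.cons none
    | some z =>
      have : ((some z :: t : List (Option α)).filterMap id) = z :: t.filterMap id := by
        simp [List.filterMap_cons]
      rw [this]
      have hlen : (some z :: t : List (Option α)).length - (z :: t.filterMap id).length
          = t.length - (t.filterMap id).length := by simp
      rw [hlen, List.map_cons]
      refine (ih.cons (some z)).trans ?_
      exact (List.perm_middle).symm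

lemma perm_of_filterMap_perm {α : Type*} {l₁ l₂ : List (Option α)}
    (hlen : l₁.length = l₂.length) (hf : (l₁.filterMap id).Perm (l₂.filterMap id)) :
    l₁.Perm l₂ := by
  refine (perm_replicate_append l₁).trans (List.Perm.trans ?_ (perm_replicate_append l₂).symm)
  have : l₁.length - (l₁.filterMap id).length = l₂.length - (l₂.filterMap id).length := by
    rw [hlen, hf.length_eq]
  rw [this]
  exact List.Perm.append (List.Perm.refl _) (hf.map some)

lemma exists_perm_comp {α : Type*} : ∀ {dd : ℕ} (f g : Fin dd → α),
    (List.ofFn f).Perm (List.ofFn g) → ∃ e : Equiv.Perm (Fin dd), f ∘ e = g := by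
  intro dd
  induction dd with
  | zero => exact fun f g _ => ⟨Equiv.refl _, funext fun i => i.elim0⟩
  | succ n ih =>
    intro f g h
    have hg0 : g 0 ∈ List.ofFn f := by
      rw [h.mem_iff]
      rw [List.mem_ofFn]
      exact ⟨0, rfl⟩
    rw [List.mem_ofFn] at hg0
    obtain ⟨j, hj⟩ := hg0
    set f' : Fin (n + 1) → α := f ∘ ⇑(Equiv.swap j 0) with hf'
    have hf'0 : f' 0 = g 0 := by
      rw [hf']
      simp only [Function.comp_apply, Equiv.swap_apply_right]
      exact hj
    have h' : (List.ofFn f').Perm (List.ofFn g) :=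
      (Equiv.Perm.ofFn_comp_perm (Equiv.swap j 0) f).trans h
    rw [List.ofFn_succ, List.ofFn_succ, hf'0] at h'
    have htail := h'.cons_inv
    obtain ⟨e', he'⟩ := ih _ _ htail
    set e0 : Equiv.Perm (Fin (n + 1)) :=
      (finSuccEquiv n).trans ((Equiv.optionCongr e').trans (finSuccEquiv n).symm) with he0
    have key : f' ∘ ⇑e0 = g := by
      funext i
      induction i using Fin.cases with
      | zero =>
        have : e0 0 = 0 := by
          rw [he0]
          simp
        rw [Function.comp_apply, this, hf'0]
      | succ i =>
        have : e0 i.succ = (e' i).succ := by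
          rw [he0]
          simp
        rw [Function.comp_apply, this]
        exact congrFun he' i
    refine ⟨e0.trans (Equiv.swap j 0), ?_⟩
    rw [← key, hf']
    rfl

lemma exists_perm_of_multiset_eq {α : Type*} {dd : ℕ} (f g : Fin dd → α)
    (h : ((List.ofFn f : List α) : Multiset α) = (List.ofFn g : List α)) :
    ∃ e : Equiv.Perm (Fin dd), f ∘ e = g :=
  exists_perm_comp f g (Multiset.coe_eq_coe.1 h)

end PermPart

section MainMaps

open Polynomial OnePoint

variable (d : ℕ)

/-- The coefficient map from tuples to complex projective space. -/
noncomputable def Fmap (f : Fin d → OnePoint ℂ) : Projectivization ℂ (Fin (d + 1) → ℂ) :=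
  Projectivization.mk ℂ (cvec d (Pprod d f))
    (cvec_ne_zero d (Pprod_monic d f) (Pprod_natDegree_le d f))

lemma mk_eq_of_eq {K V : Type*} [DivisionRing K] [AddCommGroup V] [Module K V]
    {v w : V} (hv : v ≠ 0) (hw : w ≠ 0) (h : v = w) :
    Projectivization.mk K v hv = Projectivization.mk K w hw := by subst h; rfl

lemma Fmap_comp_perm (f : Fin d → OnePoint ℂ) (e : Equiv.Perm (Fin d)) :
    Fmap d (f ∘ e) = Fmap d f :=
  mk_eq_of_eq _ _ (by rw [Pprod_comp_perm])

/-- The induced map on the symmetric product. -/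
noncomputable def Fbar : SP d (OnePoint ℂ) → Projectivization ℂ (Fin (d + 1) → ℂ) :=
  Quotient.lift (Fmap d) (by rintro f g ⟨e, rfl⟩; exact (Fmap_comp_perm d f e).symm)

lemma Fbar_mk (f : Fin d → OnePoint ℂ) :
    Fbar d (Quotient.mk (spSetoid d (OnePoint ℂ)) f) = Fmap d f := rfl

lemma Pprod_eq_of_Fmap_eq {f g : Fin d → OnePoint ℂ} (h : Fmap d f = Fmap d g) :
    Pprod d f = Pprod d g := by
  rw [Fmap, Fmap, Projectivization.mk_eq_mk_iff] at h
  obtain ⟨a, ha⟩ := h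
  have h1 : Pprod d f = C (a : ℂ) * Pprod d g :=
    eq_C_mul_of_cvec_smul d (Pprod_natDegree_le d f) (Pprod_natDegree_le d g) a ha.symm
  have h2 : (1 : ℂ) = (a : ℂ) := by
    have := congrArg leadingCoeff h1
    rw [(Pprod_monic d f).leadingCoeff, leadingCoeff_mul, leadingCoeff_C,
      (Pprod_monic d g).leadingCoeff, mul_one] at this
    exact this
  rw [h1, ← h2, map_one, one_mul]

lemma Fbar_injective : Function.Injective (Fbar d) := by
  intro x y h
  obtain ⟨f, rfl⟩ := Quotient.exists_rep x
  obtain ⟨g, rfl⟩ := Quotient.exists_rep y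
  rw [Fbar_mk, Fbar_mk] at h
  have hP := Pprod_eq_of_Fmap_eq d h
  have hroots := congrArg roots hP
  rw [Pprod_roots, Pprod_roots] at hroots
  have hperm : ((List.ofFn f).filterMap id).Perm ((List.ofFn g).filterMap id) :=
    Multiset.coe_eq_coe.1 hroots
  have hlen : (List.ofFn f).length = (List.ofFn g).length := by
    rw [List.length_ofFn, List.length_ofFn]
  obtain ⟨e, he⟩ := exists_perm_comp f g (perm_of_filterMap_perm hlen hperm)
  exact Quotient.sound ⟨e, he⟩

/-- Inclusion of real projective space into complex projective space. -/
noncomputable def iota : Projectivization ℝ (Fin (d + 1) → ℝ) →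
    Projectivization ℂ (Fin (d + 1) → ℂ) :=
  Quotient.lift
    (fun v : {v : Fin (d + 1) → ℝ // v ≠ 0} =>
      Projectivization.mk ℂ (fun k => ((v.1 k : ℝ) : ℂ))
        (fun h => v.2 (funext fun k => by
          have := congrFun h k
          simpa using this)))
    (by
      rintro ⟨v, hv⟩ ⟨w, hw⟩ ⟨a, ha⟩
      show Projectivization.mk ℂ (fun k => ((v k : ℝ) : ℂ)) _ =
        Projectivization.mk ℂ (fun k => ((w k : ℝ) : ℂ)) _
      rw [Projectivization.mk_eq_mk_iff']
      refine ⟨((a : ℝ) : ℂ), funext fun k => ?_⟩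
      have h1 : (a : ℝ) * w k = v k := by
        have := congrFun ha k
        simpa [Units.smul_def] using this
      show ((a : ℝ) : ℂ) * ((w k : ℝ) : ℂ) = ((v k : ℝ) : ℂ)
      rw [← h1]
      push_cast
      ring)

lemma iota_mk (v : Fin (d + 1) → ℝ) (hv : v ≠ 0) :
    iota d (Projectivization.mk ℝ v hv) = Projectivization.mk ℂ (fun k => ((v k : ℝ) : ℂ))
      (fun h => hv (funext fun k => by simpa using congrFun h k)) := rfl

lemma iota_injective : Function.Injective (iota d) := by
  intro x y h
  obtain ⟨⟨v, hv⟩, rfl⟩ := Quotient.exists_rep x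
  obtain ⟨⟨w, hw⟩, rfl⟩ := Quotient.exists_rep y
  have hx : Quotient.mk (projectivizationSetoid ℝ (Fin (d+1) → ℝ)) ⟨v, hv⟩ =
      Projectivization.mk ℝ v hv := rfl
  have hy : Quotient.mk (projectivizationSetoid ℝ (Fin (d+1) → ℝ)) ⟨w, hw⟩ =
      Projectivization.mk ℝ w hw := rfl
  rw [hx, hy] at h ⊢
  rw [iota_mk, iota_mk, Projectivization.mk_eq_mk_iff'] at h
  obtain ⟨a, ha⟩ := h
  obtain ⟨k, hk⟩ := Function.ne_iff.1 hw
  rw [Pi.zero_apply] at hk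
  have hak : a * (w k : ℂ) = (v k : ℂ) := congrFun ha k
  have haR : a = ((a.re : ℝ) : ℂ) := by
    have : a = (v k : ℂ) / (w k : ℂ) := by
      rw [← hak, mul_div_assoc, div_self (by exact_mod_cast hk), mul_one]
    rw [this, ← Complex.ofReal_div]
    simp [Complex.ext_iff]
  rw [Projectivization.mk_eq_mk_iff']
  refine ⟨a.re, funext fun j => ?_⟩
  have haj : a * (w j : ℂ) = (v j : ℂ) := congrFun ha j
  rw [haR] at haj
  have : ((a.re * w j : ℝ) : ℂ) = ((v j : ℝ) : ℂ) := by push_cast; exact haj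
  exact_mod_cast this

lemma Pprod_map_conj (f : Fin d → OnePoint ℂ) :
    (Pprod d f).map (starRingEnd ℂ) = Pprod d (sphereConj ∘ f) := by
  rw [Pprod, Pprod, Polynomial.map_prod]
  refine Finset.prod_congr rfl fun i _ => ?_
  cases hfi : f i with
  | infty =>
    simp only [Function.comp_apply, hfi, lpoly_infty, Polynomial.map_one]
    rfl
  | coe z =>
    simp only [Function.comp_apply, hfi, lpoly_coe]
    have : sphereConj (z : OnePoint ℂ) = ((starRingEnd ℂ z : ℂ) : OnePoint ℂ) := rfl
    rw [this, lpoly_coe, Polynomial.map_sub, map_X, map_C]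

end MainMaps

section Surj

open Polynomial OnePoint

lemma ofFn_get_cast {α : Type*} {n : ℕ} (l : List α) (h : l.length = n) :
    List.ofFn (fun i : Fin n => l.get (Fin.cast h.symm i)) = l := by
  subst h
  simp [List.ofFn_get]

lemma filterMap_id_map_coe (l : List ℂ) :
    ((l.map (OnePoint.some (X := ℂ))).filterMap id) = l := by
  induction l with
  | nil => rfl
  | cons z t ih =>
    show z :: ((t.map (OnePoint.some (X := ℂ))).filterMap id) = z :: t
    rw [ih]

lemma filterMap_id_replicate_infty (k : ℕ) :
    ((List.replicate k (∞ : OnePoint ℂ)).filterMap id) = [] := by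
  induction k with
  | zero => rfl
  | succ n ih =>
    rw [List.replicate_succ]
    show ((List.replicate n (∞ : OnePoint ℂ)).filterMap id) = []
    exact ih

variable (d : ℕ)

lemma exists_fixed_preimage (v : Fin (d + 1) → ℝ) (hv : v ≠ 0) :
    ∃ f : Fin d → OnePoint ℂ, (∃ e : Equiv.Perm (Fin d), (sphereConj ∘ f) ∘ e = f) ∧
      Fmap d f = iota d (Projectivization.mk ℝ v hv) := by
  classical
  set P₀ : ℂ[X] := ∑ k : Fin (d + 1), C ((v k : ℝ) : ℂ) * X ^ (k : ℕ) with hP₀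
  have hcoeff : ∀ j : ℕ, P₀.coeff j =
      if h : j < d + 1 then ((v ⟨j, h⟩ : ℝ) : ℂ) else 0 := by
    intro j
    rw [hP₀, finset_sum_coeff]
    have hterm : ∀ k : Fin (d + 1), (C ((v k : ℝ) : ℂ) * X ^ (k : ℕ)).coeff j =
        if j = (k : ℕ) then ((v k : ℝ) : ℂ) else 0 := fun k => by
      rw [coeff_C_mul, coeff_X_pow, mul_ite, mul_one, mul_zero]
    rw [Finset.sum_congr rfl fun k _ => hterm k]
    by_cases h : j < d + 1
    · rw [dif_pos h, Finset.sum_eq_single (⟨j, h⟩ : Fin (d + 1))]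
      · simp
      · intro b _ hb
        rw [if_neg (fun hbj => hb (Fin.ext hbj.symm))]
      · intro habs
        exact absurd (Finset.mem_univ _) habs
    · rw [dif_neg h, Finset.sum_eq_zero]
      intro k _
      rw [if_neg]
      intro hkj
      exact h (by rw [hkj]; exact k.isLt)
  have hne : P₀ ≠ 0 := by
    obtain ⟨k, hk⟩ := Function.ne_iff.1 hv
    rw [Pi.zero_apply] at hk
    intro h0
    have := hcoeff (k : ℕ)
    rw [h0, Polynomial.coeff_zero, dif_pos k.isLt] at this
    rw [Fin.eta] at this
    exact hk (by exact_mod_cast this.symm)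
  have hdeg : P₀.natDegree ≤ d := by
    rw [Polynomial.natDegree_le_iff_coeff_eq_zero]
    intro N hN
    rw [hcoeff N, dif_neg (by omega)]
  have hsplits : P₀.Splits := IsAlgClosed.splits P₀
  have hcard : Multiset.card P₀.roots = P₀.natDegree := (splits_iff_card_roots).mp hsplits
  have hcardle : Multiset.card P₀.roots ≤ d := hcard.le.trans hdeg
  set m : Multiset ℂ := P₀.roots with hm
  set L : List (OnePoint ℂ) :=
    (m.toList.map (OnePoint.some (X := ℂ))) ++
      List.replicate (d - Multiset.card m) (∞ : OnePoint ℂ) with hL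
  have hLlen : L.length = d := by
    rw [hL, List.length_append, List.length_map, Multiset.length_toList, List.length_replicate]
    omega
  refine ⟨fun i : Fin d => L.get (Fin.cast hLlen.symm i), ?_, ?_⟩
  case refine_2 =>
    set f : Fin d → OnePoint ℂ := fun i => L.get (Fin.cast hLlen.symm i) with hf
    have hofFn : List.ofFn f = L := ofFn_get_cast L hLlen
    have hfilter : L.filterMap id = m.toList := by
      erw [hL, List.filterMap_append, filterMap_id_map_coe, filterMap_id_replicate_infty,
        List.append_nil]
    have hPf : Pprod d f = (Multiset.map (fun z => X - C z) m).prod := by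
      rw [Pprod_eq_multiset, hofFn, hfilter, Multiset.coe_toList]
    have hlcP : C P₀.leadingCoeff * Pprod d f = P₀ := by
      rw [hPf]
      exact C_leadingCoeff_mul_prod_multiset_X_sub_C hcard
    have hlc0 : P₀.leadingCoeff ≠ 0 := leadingCoeff_ne_zero.mpr hne
    have hPfval : Pprod d f = C (P₀.leadingCoeff⁻¹) * P₀ := by
      have h1 : C P₀.leadingCoeff⁻¹ * (C P₀.leadingCoeff * Pprod d f) =
          C P₀.leadingCoeff⁻¹ * P₀ := by rw [hlcP]
      rw [← mul_assoc, ← C_mul, inv_mul_cancel₀ hlc0, C_1, one_mul] at h1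
      exact h1
    rw [Fmap, iota_mk, Projectivization.mk_eq_mk_iff']
    refine ⟨P₀.leadingCoeff⁻¹, funext fun k => ?_⟩
    show P₀.leadingCoeff⁻¹ * ((v k : ℝ) : ℂ) = (Pprod d f).coeff (k : ℕ)
    rw [hPfval, coeff_C_mul, hcoeff (k : ℕ), dif_pos k.isLt, Fin.eta]
  case refine_1 =>
    set f : Fin d → OnePoint ℂ := fun i => L.get (Fin.cast hLlen.symm i) with hf
    have hofFn : List.ofFn f = L := ofFn_get_cast L hLlen
    have hPreal : P₀.map (starRingEnd ℂ) = P₀ := by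
      apply Polynomial.ext
      intro j
      rw [Polynomial.coeff_map, hcoeff j]
      by_cases h : j < d + 1
      · rw [dif_pos h, Complex.conj_ofReal]
      · rw [dif_neg h, map_zero]
    have hrootsconj : m.map (starRingEnd ℂ) = m := by
      have h1 := hsplits.roots_map (starRingEnd ℂ)
      rw [hPreal] at h1
      rw [hm]
      exact h1.symm
    apply exists_perm_of_multiset_eq
    have hmap : List.ofFn (sphereConj ∘ f) = (List.ofFn f).map sphereConj :=
      (List.map_ofFn (f := f) (g := sphereConj)).symm
    rw [hmap, hofFn]
    have hp : (m.toList.map (starRingEnd ℂ)).Perm m.toList := by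
      rw [← Multiset.coe_eq_coe, ← Multiset.map_coe, Multiset.coe_toList]
      exact hrootsconj
    have hLmap : L.map sphereConj =
        ((m.toList.map (starRingEnd ℂ)).map (OnePoint.some (X := ℂ))) ++
          List.replicate (d - Multiset.card m) (∞ : OnePoint ℂ) := by
      rw [hL, List.map_append, List.map_map, List.map_map, List.map_replicate]
      rfl
    rw [hLmap, hL, Multiset.coe_eq_coe]
    exact (hp.map (OnePoint.some (X := ℂ))).append_right _
end Surj

section RangeEq

open Polynomial OnePoint

variable (d : ℕ)

/-- The restriction of `Fbar` to the conjugation-fixed locus. -/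
noncomputable def Phi : {x : SP d (OnePoint ℂ) // spConj d x = x} →
    Projectivization ℂ (Fin (d + 1) → ℂ) := fun x => Fbar d x.1

lemma Phi_injective : Function.Injective (Phi d) :=
  fun _ _ h => Subtype.ext (Fbar_injective d h)

lemma range_Phi_eq : Set.range (Phi d) = Set.range (iota d) := by
  apply Set.Subset.antisymm
  · rintro _ ⟨x, rfl⟩
    obtain ⟨f, hfm⟩ := Quotient.exists_rep x.1
    have hfix : ∃ e : Equiv.Perm (Fin d), (sphereConj ∘ f) ∘ e = f := by
      have hx := x.2
      rw [← hfm] at hx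
      have : spConj d (Quotient.mk (spSetoid d (OnePoint ℂ)) f) =
          Quotient.mk (spSetoid d (OnePoint ℂ)) (sphereConj ∘ f) := rfl
      rw [this] at hx
      exact Quotient.exact hx
    obtain ⟨e, he⟩ := hfix
    have hP : (Pprod d f).map (starRingEnd ℂ) = Pprod d f := by
      rw [Pprod_map_conj]
      have h1 : Pprod d ((sphereConj ∘ f) ∘ e) = Pprod d (sphereConj ∘ f) :=
        Pprod_comp_perm d (sphereConj ∘ f) e
      rw [← h1, he]
    have hconj : ∀ k : ℕ, (starRingEnd ℂ) ((Pprod d f).coeff k) = (Pprod d f).coeff k := by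
      intro k
      have := congrArg (fun Q => Polynomial.coeff Q k) hP
      simpa [Polynomial.coeff_map] using this
    set w : Fin (d + 1) → ℝ := fun k => ((Pprod d f).coeff k).re with hwdef
    have hwv : (fun k : Fin (d + 1) => ((w k : ℝ) : ℂ)) = cvec d (Pprod d f) :=
      funext fun k => Complex.conj_eq_iff_re.1 (hconj k)
    have hw0 : w ≠ 0 := by
      intro h0
      apply cvec_ne_zero d (Pprod_monic d f) (Pprod_natDegree_le d f)
      rw [← hwv, h0]
      funext k
      simp
    refine ⟨Projectivization.mk ℝ w hw0, ?_⟩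
    rw [iota_mk]
    have hPhi : Phi d x = Fmap d f := by
      rw [Phi, ← hfm, Fbar_mk]
    rw [hPhi, Fmap]
    exact mk_eq_of_eq (K := ℂ) _ _ hwv
  · rintro _ ⟨y, rfl⟩
    obtain ⟨⟨v, hv⟩, hvm⟩ := Quotient.exists_rep y
    have hy : y = Projectivization.mk ℝ v hv := hvm.symm
    obtain ⟨f, ⟨e, he⟩, hF⟩ := exists_fixed_preimage d v hv
    have hfix : spConj d (Quotient.mk (spSetoid d (OnePoint ℂ)) f) =
        Quotient.mk (spSetoid d (OnePoint ℂ)) f := by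
      have : spConj d (Quotient.mk (spSetoid d (OnePoint ℂ)) f) =
          Quotient.mk (spSetoid d (OnePoint ℂ)) (sphereConj ∘ f) := rfl
      rw [this]
      exact Quotient.sound ⟨e, he⟩
    refine ⟨⟨Quotient.mk (spSetoid d (OnePoint ℂ)) f, hfix⟩, ?_⟩
    rw [Phi]
    show Fbar d (Quotient.mk (spSetoid d (OnePoint ℂ)) f) = iota d y
    rw [Fbar_mk, hF, hy]

end RangeEq

section Cont

open Polynomial OnePoint Metric

/-- The standard parametrization of the Riemann sphere by the unit sphere in `ℂ²`. -/
noncomputable def psph (v : Metric.sphere (0 : Fin 2 → ℂ) 1) : OnePoint ℂ :=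
  if (v : Fin 2 → ℂ) 0 = 0 then ∞ else (((v : Fin 2 → ℂ) 1 / (v : Fin 2 → ℂ) 0 : ℂ) : OnePoint ℂ)

lemma sphere_snd_ne {v : Metric.sphere (0 : Fin 2 → ℂ) 1} (h0 : (v : Fin 2 → ℂ) 0 = 0) :
    (v : Fin 2 → ℂ) 1 ≠ 0 := by
  intro h1
  have hv : (v : Fin 2 → ℂ) = 0 := by
    funext i
    fin_cases i
    · exact h0
    · exact h1
  have := v.2
  rw [mem_sphere_zero_iff_norm, hv] at this
  simp at this

lemma pmap_surjective : Function.Surjective psph := by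
  intro y
  cases y with
  | infty =>
    have hmem : (![0, 1] : Fin 2 → ℂ) ∈ Metric.sphere (0 : Fin 2 → ℂ) 1 := by
      rw [mem_sphere_zero_iff_norm]
      refine le_antisymm ((pi_norm_le_iff_of_nonneg zero_le_one).2 fun i => by
        fin_cases i <;> simp) ?_
      simpa using norm_le_pi_norm (![0, 1] : Fin 2 → ℂ) 1
    refine ⟨⟨![0, 1], hmem⟩, ?_⟩
    rw [psph, if_pos (by simp)]
  | coe z =>
    set u : Fin 2 → ℂ := ![1, z] with hu
    have hu0 : u ≠ 0 := by
      intro h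
      have := congrFun h 0
      simp [hu] at this
    have hn : 0 < ‖u‖ := norm_pos_iff.2 hu0
    have hmem : ‖u‖⁻¹ • u ∈ Metric.sphere (0 : Fin 2 → ℂ) 1 := by
      rw [mem_sphere_zero_iff_norm, norm_smul, norm_inv, norm_norm,
        inv_mul_cancel₀ hn.ne']
    refine ⟨⟨‖u‖⁻¹ • u, hmem⟩, ?_⟩
    have h00 : ((‖u‖⁻¹ • u) : Fin 2 → ℂ) 0 = (‖u‖⁻¹ : ℝ) • (1 : ℂ) := by simp [hu]
    have hne : ((‖u‖⁻¹ • u) : Fin 2 → ℂ) 0 ≠ 0 := by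
      rw [h00]
      simp [hn.ne']
    rw [psph, if_neg hne]
    congr 1
    show ((‖u‖⁻¹ • u) 1) / ((‖u‖⁻¹ • u) 0) = z
    have h1 : (‖u‖⁻¹ • u) 1 = (‖u‖⁻¹ : ℝ) • z := by simp [hu]
    rw [h00, h1, Complex.real_smul, Complex.real_smul, mul_one, mul_comm,
      mul_div_assoc, div_self (by simpa using hn.ne'), mul_one]

lemma continuous_pmap : Continuous psph := by
  have hc0 : Continuous fun w : Metric.sphere (0 : Fin 2 → ℂ) 1 => (w : Fin 2 → ℂ) 0 :=
    (continuous_apply 0).comp continuous_subtype_val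
  have hc1 : Continuous fun w : Metric.sphere (0 : Fin 2 → ℂ) 1 => (w : Fin 2 → ℂ) 1 :=
    (continuous_apply 1).comp continuous_subtype_val
  rw [continuous_iff_continuousAt]
  intro v
  by_cases h0 : (v : Fin 2 → ℂ) 0 = 0
  · have hv1 : (v : Fin 2 → ℂ) 1 ≠ 0 := sphere_snd_ne h0
    have hpv : psph v = ∞ := if_pos h0
    rw [ContinuousAt, hpv, OnePoint.hasBasis_nhds_infty.tendsto_right_iff]
    rintro s ⟨_, hscpt⟩
    obtain ⟨R, hR⟩ := hscpt.isBounded.subset_closedBall 0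
    set c : ℝ := ‖(v : Fin 2 → ℂ) 1‖ with hc
    have hcpos : 0 < c := norm_pos_iff.2 hv1
    set ε : ℝ := (c / 2) / (max R 0 + 1) with hε
    have hMpos : (0 : ℝ) < max R 0 + 1 := by positivity
    have hεpos : 0 < ε := by positivity
    have E1 : ∀ᶠ w : Metric.sphere (0 : Fin 2 → ℂ) 1 in 𝓝 v,
        c / 2 < ‖(w : Fin 2 → ℂ) 1‖ := by
      have hopen : IsOpen {w : Metric.sphere (0 : Fin 2 → ℂ) 1 |
          c / 2 < ‖(w : Fin 2 → ℂ) 1‖} := isOpen_lt continuous_const hc1.norm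
      exact hopen.mem_nhds (by simp only [Set.mem_setOf_eq]; linarith)
    have E2 : ∀ᶠ w : Metric.sphere (0 : Fin 2 → ℂ) 1 in 𝓝 v,
        ‖(w : Fin 2 → ℂ) 0‖ < ε := by
      have hopen : IsOpen {w : Metric.sphere (0 : Fin 2 → ℂ) 1 |
          ‖(w : Fin 2 → ℂ) 0‖ < ε} := isOpen_lt hc0.norm continuous_const
      exact hopen.mem_nhds (by simp [h0, hεpos])
    filter_upwards [E1, E2] with w hw1 hw0
    by_cases hw00 : (w : Fin 2 → ℂ) 0 = 0
    · have : psph w = ∞ := if_pos hw00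
      rw [this]
      exact Or.inr rfl
    · have hpw : psph w = (((w : Fin 2 → ℂ) 1 / (w : Fin 2 → ℂ) 0 : ℂ) : OnePoint ℂ) :=
        if_neg hw00
      rw [hpw]
      left
      refine ⟨_, ?_, rfl⟩
      intro hmem
      have hball := hR hmem
      rw [Metric.mem_closedBall, dist_zero_right, norm_div] at hball
      have hw0pos : 0 < ‖(w : Fin 2 → ℂ) 0‖ := norm_pos_iff.2 hw00
      have step1 : (c / 2) / ε ≤ (c / 2) / ‖(w : Fin 2 → ℂ) 0‖ :=
        div_le_div_of_nonneg_left (by positivity) hw0pos hw0.le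
      have step2 : (c / 2) / ‖(w : Fin 2 → ℂ) 0‖ < ‖(w : Fin 2 → ℂ) 1‖ / ‖(w : Fin 2 → ℂ) 0‖ :=
        (div_lt_div_iff_of_pos_right hw0pos).2 hw1
      have hid : (c / 2) / ε = max R 0 + 1 := by
        rw [hε]
        field_simp
      have : max R 0 + 1 ≤ ‖(w : Fin 2 → ℂ) 1‖ / ‖(w : Fin 2 → ℂ) 0‖ := by
        rw [← hid]
        exact step1.trans step2.le
      have hRlt : R < ‖(w : Fin 2 → ℂ) 1‖ / ‖(w : Fin 2 → ℂ) 0‖ := by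
        have : R ≤ max R 0 := le_max_left _ _
        linarith
      linarith
  · have hg : ContinuousAt (fun w : Metric.sphere (0 : Fin 2 → ℂ) 1 =>
        (((w : Fin 2 → ℂ) 1 / (w : Fin 2 → ℂ) 0 : ℂ) : OnePoint ℂ)) v :=
      (OnePoint.continuous_coe.continuousAt).comp (hc1.continuousAt.div hc0.continuousAt h0)
    refine hg.congr ?_
    have hopen : IsOpen {w : Metric.sphere (0 : Fin 2 → ℂ) 1 | (w : Fin 2 → ℂ) 0 ≠ 0} :=
      (isClosed_eq hc0 continuous_const).isOpen_compl
    filter_upwards [hopen.mem_nhds h0] with w hw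
    exact (if_neg hw).symm

end Cont

section Cont2

open Polynomial OnePoint Metric

variable (d : ℕ)

noncomputable def qmap (vv : Fin d → Metric.sphere (0 : Fin 2 → ℂ) 1) :
    Fin d → OnePoint ℂ := fun i => psph (vv i)

lemma isQuotientMap_qmap : IsQuotientMap (qmap d) := by
  haveI : CompactSpace (Metric.sphere (0 : Fin 2 → ℂ) 1) :=
    isCompact_iff_compactSpace.mp (isCompact_sphere 0 1)
  have hcont : Continuous (qmap d) :=
    continuous_pi fun i => continuous_pmap.comp (continuous_apply i)
  have hsurj : Function.Surjective (qmap d) := by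
    intro g
    choose vv hvv using fun i => pmap_surjective (g i)
    exact ⟨vv, funext hvv⟩
  exact (hcont.isClosedMap).isQuotientMap hcont hsurj

lemma continuous_coeff_prod {X ι : Type*} [TopologicalSpace X] (s : Finset ι)
    (g : ι → X → Polynomial ℂ) (hg : ∀ i k, Continuous fun x => (g i x).coeff k) :
    ∀ k, Continuous fun x => (∏ i ∈ s, g i x).coeff k := by
  classical
  induction s using Finset.induction with
  | empty =>
    intro k
    simp only [Finset.prod_empty]
    exact continuous_const
  | insert a s ha ih =>
    intro k
    have : (fun x => (∏ i ∈ insert a s, g i x).coeff k) =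
        fun x => ∑ ij ∈ Finset.HasAntidiagonal.antidiagonal k, (g a x).coeff ij.1 *
          (∏ i ∈ s, g i x).coeff ij.2 := by
      funext x
      rw [Finset.prod_insert ha, Polynomial.coeff_mul]
    rw [this]
    exact continuous_finset_sum _ fun ij _ => (hg a ij.1).mul (ih ij.2)

/-- Scaling factor comparing the two normalizations of a linear form. -/
noncomputable def scal (u : Metric.sphere (0 : Fin 2 → ℂ) 1) : ℂ :=
  if (u : Fin 2 → ℂ) 0 = 0 then -((u : Fin 2 → ℂ) 1) else (u : Fin 2 → ℂ) 0

lemma scal_ne_zero (u : Metric.sphere (0 : Fin 2 → ℂ) 1) : scal u ≠ 0 := by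
  rw [scal]
  split_ifs with h
  · exact neg_ne_zero.2 (sphere_snd_ne h)
  · exact h

lemma linear_eq_scal (u : Metric.sphere (0 : Fin 2 → ℂ) 1) :
    C ((u : Fin 2 → ℂ) 0) * X - C ((u : Fin 2 → ℂ) 1) = C (scal u) * lpoly (psph u) := by
  by_cases h : (u : Fin 2 → ℂ) 0 = 0
  · rw [scal, if_pos h, psph, if_pos h, lpoly_infty, mul_one, h, map_zero, zero_mul,
      zero_sub, map_neg]
  · rw [scal, if_neg h, psph, if_neg h, lpoly_coe, mul_sub, ← C_mul,
      mul_div_cancel₀ _ h]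

noncomputable def Gvec (vv : Fin d → Metric.sphere (0 : Fin 2 → ℂ) 1) : Fin (d + 1) → ℂ :=
  fun k => (∏ i, (C ((vv i : Fin 2 → ℂ) 0) * X - C ((vv i : Fin 2 → ℂ) 1))).coeff k

lemma Gvec_eq (vv : Fin d → Metric.sphere (0 : Fin 2 → ℂ) 1) :
    Gvec d vv = (∏ i, scal (vv i)) • cvec d (Pprod d (qmap d vv)) := by
  funext k
  have h1 : (∏ i, (C ((vv i : Fin 2 → ℂ) 0) * X - C ((vv i : Fin 2 → ℂ) 1))) =
      C (∏ i, scal (vv i)) * Pprod d (qmap d vv) := by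
    rw [Pprod, map_prod, ← Finset.prod_mul_distrib]
    exact Finset.prod_congr rfl fun i _ => linear_eq_scal (vv i)
  show (∏ i, (C ((vv i : Fin 2 → ℂ) 0) * X - C ((vv i : Fin 2 → ℂ) 1))).coeff k = _
  rw [h1, coeff_C_mul]
  rfl

lemma Gvec_ne_zero (vv : Fin d → Metric.sphere (0 : Fin 2 → ℂ) 1) : Gvec d vv ≠ 0 := by
  rw [Gvec_eq]
  exact smul_ne_zero (Finset.prod_ne_zero_iff.2 fun i _ => scal_ne_zero (vv i))
    (cvec_ne_zero d (Pprod_monic d _) (Pprod_natDegree_le d _))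

lemma continuous_Gvec : Continuous (Gvec d) := by
  apply continuous_pi
  intro k
  have hrfl : (fun vv => Gvec d vv k) = fun vv : Fin d → Metric.sphere (0 : Fin 2 → ℂ) 1 =>
      (∏ i, (C ((vv i : Fin 2 → ℂ) 0) * X - C ((vv i : Fin 2 → ℂ) 1))).coeff (k : ℕ) := rfl
  rw [hrfl]
  have hg : ∀ (i : Fin d) (k' : ℕ), Continuous fun vv : Fin d → Metric.sphere (0 : Fin 2 → ℂ) 1 =>
      ((C ((vv i : Fin 2 → ℂ) 0) * X - C ((vv i : Fin 2 → ℂ) 1)).coeff k') := by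
    intro i k'
    have hc0 : Continuous fun vv : Fin d → Metric.sphere (0 : Fin 2 → ℂ) 1 =>
        ((vv i : Fin 2 → ℂ) 0) :=
      (continuous_apply 0).comp (continuous_subtype_val.comp (continuous_apply i))
    have hc1 : Continuous fun vv : Fin d → Metric.sphere (0 : Fin 2 → ℂ) 1 =>
        ((vv i : Fin 2 → ℂ) 1) :=
      (continuous_apply 1).comp (continuous_subtype_val.comp (continuous_apply i))
    have hexp : (fun vv : Fin d → Metric.sphere (0 : Fin 2 → ℂ) 1 =>
        ((C ((vv i : Fin 2 → ℂ) 0) * X - C ((vv i : Fin 2 → ℂ) 1)).coeff k')) =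
        fun vv => ((vv i : Fin 2 → ℂ) 0) * (X : ℂ[X]).coeff k' -
          (if k' = 0 then ((vv i : Fin 2 → ℂ) 1) else 0) := by
      funext vv
      rw [Polynomial.coeff_sub, coeff_C_mul, Polynomial.coeff_C]
    rw [hexp]
    refine (hc0.mul continuous_const).sub ?_
    by_cases hk : k' = 0
    · simpa [hk] using hc1
    · simpa [hk] using (continuous_const : Continuous fun _ :
        (Fin d → Metric.sphere (0 : Fin 2 → ℂ) 1) => (0 : ℂ))
  exact continuous_coeff_prod Finset.univ
    (fun (i : Fin d) (vv : Fin d → Metric.sphere (0 : Fin 2 → ℂ) 1) =>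
      C ((vv i : Fin 2 → ℂ) 0) * X - C ((vv i : Fin 2 → ℂ) 1)) hg (k : ℕ)

lemma continuous_Fbar : Continuous (Fbar d) := by
  letI s := spSetoid d (OnePoint ℂ)
  have hq : IsQuotientMap (Quotient.mk s) := isQuotientMap_quot_mk
  rw [show Fbar d = Fbar d from rfl]
  apply (hq.continuous_iff).2
  have h1 : (Fbar d) ∘ (Quotient.mk s) = Fmap d := rfl
  refine (congrArg Continuous h1).mpr ?_
  apply ((isQuotientMap_qmap d).continuous_iff).2
  have h2 : (Fmap d) ∘ (qmap d) = fun vv => Projectivization.mk ℂ (Gvec d vv)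
      (Gvec_ne_zero d vv) := by
    funext vv
    show Fmap d (qmap d vv) = _
    rw [Fmap, Projectivization.mk_eq_mk_iff']
    refine ⟨(∏ i, scal (vv i))⁻¹, ?_⟩
    rw [Gvec_eq, smul_smul, inv_mul_cancel₀
      (Finset.prod_ne_zero_iff.2 fun i _ => scal_ne_zero (vv i)), one_smul]
  rw [h2]
  exact continuous_quot_mk.comp ((continuous_Gvec d).subtype_mk _)

lemma continuous_Phi : Continuous (Phi d) :=
  (continuous_Fbar d).comp continuous_subtype_val

lemma continuous_iota : Continuous (iota d) := by
  letI s := projectivizationSetoid ℝ (Fin (d + 1) → ℝ)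
  have hq : IsQuotientMap (Quotient.mk s) := isQuotientMap_quot_mk
  apply (hq.continuous_iff).2
  have h1 : (iota d) ∘ (Quotient.mk s) =
      fun v : {v : Fin (d + 1) → ℝ // v ≠ 0} =>
        Projectivization.mk ℂ (fun k => ((v.1 k : ℝ) : ℂ))
          (fun h => v.2 (funext fun k => by simpa using congrFun h k)) := rfl
  refine (congrArg Continuous h1).mpr ?_
  refine continuous_quot_mk.comp (Continuous.subtype_mk ?_ _)
  exact continuous_pi fun k =>
    Complex.continuous_ofReal.comp ((continuous_apply k).comp continuous_subtype_val)

end Cont2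

/-- The real projective space `ℝPᵈ` is homeomorphic to `SP^d(ℂP¹)_ℝ`, the subspace of the
`d`-fold symmetric product of the Riemann sphere consisting of unordered `d`-tuples
invariant under complex conjugation. -/
theorem realProjectiveSpace_homeomorph_fixed_symmetricProduct (d : ℕ) :
    Nonempty (Projectivization ℝ (Fin (d + 1) → ℝ) ≃ₜ
      {x : SP d (OnePoint ℂ) // spConj d x = x}) := by
  haveI : T2Space (Projectivization ℂ (Fin (d + 1) → ℂ)) := t2_projectivization (d + 1)
  haveI : NeZero (d + 1) := ⟨Nat.succ_ne_zero d⟩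
  haveI : CompactSpace (Projectivization ℝ (Fin (d + 1) → ℝ)) := compact_realProj (d + 1)
  haveI : CompactSpace {x : SP d (OnePoint ℂ) // spConj d x = x} :=
    isCompact_iff_compactSpace.mp (compact_fixedSP d)
  have h1 : Topology.IsClosedEmbedding (iota d) :=
    (continuous_iota d).isClosedEmbedding (iota_injective d)
  have h2 : Topology.IsClosedEmbedding (Phi d) :=
    (continuous_Phi d).isClosedEmbedding (Phi_injective d)
  exact ⟨(h1.toIsEmbedding.toHomeomorph).trans
    ((Homeomorph.setCongr (range_Phi_eq d).symm).trans
      (h2.toIsEmbedding.toHomeomorph).symm)⟩
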